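/- For any associative algebra A over F, a ∈ A, and positive integer i, and for all x, y ∈ A: q^{-i} S_i(x) - q^i S'_i(x) = ((bad a)_i(x)) · a and q^i S_i(y) - q^{-i} S'_i(y) = a · ((bad a)_i(y)). -/
import Mathlib


open Finset

variable {F : Type*} [Field F] {A : Type*} [Ring A] [Algebra F A]

/-- The quantum adjoint map `ad_r a : x ↦ q^r a x - q^{-r} x a`. -/
noncomputable def qad (q : F) (a : A) (r : ℤ) (x : A) : A :=
  q ^ r • (a * x) - q ^ (-r) • (x * a)

/-- `bad_m a` : the balanced version of `ad`. -/
noncomputable def bad (q : F) (a : A) : ℕ → A → A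
  | 0, x => (q - q⁻¹)⁻¹ • qad q a 0 x
  | (m + 1), x =>
      (((q ^ (2 * (m + 1) : ℤ) - q ^ (-(2 * (m + 1)) : ℤ)) *
          (q ^ (2 * (m + 1) + 1 : ℤ) - q ^ (-(2 * (m + 1)) - 1 : ℤ)))⁻¹) •
        ((q ^ (2 * (m + 1) : ℤ) - q ^ (-(2 * (m + 1)) : ℤ)) ^ 2 • x +
          qad q a ((m : ℤ) + 1) (qad q a (-((m : ℤ) + 1)) x))

/-- `(bad a)_m = bad_{m-1} a ∘ ⋯ ∘ bad_0 a`, with `(bad a)_0 = id`. -/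
noncomputable def badProd (q : F) (a : A) : ℕ → A → A
  | 0 => id
  | (m + 1) => bad q a m ∘ badProd q a m

/-- `S_m = (bad a)_m ∘ (ad_m a) / (q^{2m} - q^{-2m})`, with `S_0 = id`. -/
noncomputable def Smap (q : F) (a : A) : ℕ → A → A
  | 0 => id
  | (m + 1) => fun x =>
      (q ^ (2 * (m + 1) : ℤ) - q ^ (-(2 * (m + 1)) : ℤ))⁻¹ •
        badProd q a (m + 1) (qad q a ((m : ℤ) + 1) x)

/-- `S'_m = (bad a)_m ∘ (ad_{-m} a) / (q^{2m} - q^{-2m})`, with `S'_0 = id`. -/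
noncomputable def Smap' (q : F) (a : A) : ℕ → A → A
  | 0 => id
  | (m + 1) => fun x =>
      (q ^ (2 * (m + 1) : ℤ) - q ^ (-(2 * (m + 1)) : ℤ))⁻¹ •
        badProd q a (m + 1) (qad q a (-((m : ℤ) + 1)) x)

lemma qad_smul (q : F) (a : A) (r : ℤ) (c : F) (x : A) :
    qad q a r (c • x) = c • qad q a r x := by
  simp [qad, mul_smul_comm, smul_mul_assoc, smul_sub, smul_smul, mul_comm]

lemma qad_sub (q : F) (a : A) (r : ℤ) (x y : A) :
    qad q a r (x - y) = qad q a r x - qad q a r y := by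
  simp only [qad, mul_sub, sub_mul, smul_sub]
  abel

lemma qad_mul_right (q : F) (a : A) (r : ℤ) (x : A) :
    qad q a r (x * a) = qad q a r x * a := by
  simp [qad, mul_assoc, sub_mul, smul_mul_assoc]

lemma qad_mul_left (q : F) (a : A) (r : ℤ) (x : A) :
    qad q a r (a * x) = a * qad q a r x := by
  simp [qad, mul_assoc, mul_sub, mul_smul_comm]

lemma bad_smul (q : F) (a : A) (m : ℕ) (c : F) (x : A) :
    bad q a m (c • x) = c • bad q a m x := by
  cases m <;>
    simp only [bad, qad_smul, smul_add, smul_smul, mul_comm] <;> ring_nf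

lemma bad_sub (q : F) (a : A) (m : ℕ) (x y : A) :
    bad q a m (x - y) = bad q a m x - bad q a m y := by
  cases m <;>
    simp only [bad, qad_sub, smul_sub, smul_add, ← smul_sub] <;> module

lemma bad_mul_right (q : F) (a : A) (m : ℕ) (x : A) :
    bad q a m (x * a) = bad q a m x * a := by
  cases m <;>
    simp [bad, qad_mul_right, smul_mul_assoc, add_mul]

lemma bad_mul_left (q : F) (a : A) (m : ℕ) (x : A) :
    bad q a m (a * x) = a * bad q a m x := by
  cases m <;>
    simp [bad, qad_mul_left, mul_smul_comm, mul_add]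

lemma badProd_smul (q : F) (a : A) (m : ℕ) (c : F) (x : A) :
    badProd q a m (c • x) = c • badProd q a m x := by
  induction m with
  | zero => rfl
  | succ n ih => simp [badProd, ih, bad_smul]

lemma badProd_sub (q : F) (a : A) (m : ℕ) (x y : A) :
    badProd q a m (x - y) = badProd q a m x - badProd q a m y := by
  induction m with
  | zero => rfl
  | succ n ih => simp [badProd, ih, bad_sub]

lemma badProd_mul_right (q : F) (a : A) (m : ℕ) (x : A) :
    badProd q a m (x * a) = badProd q a m x * a := by
  induction m with
  | zero => rfl
  | succ n ih => simp [badProd, ih, bad_mul_right]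

lemma badProd_mul_left (q : F) (a : A) (m : ℕ) (x : A) :
    badProd q a m (a * x) = a * badProd q a m x := by
  induction m with
  | zero => rfl
  | succ n ih => simp [badProd, ih, bad_mul_left]

lemma key_right (q : F) (hq : q ≠ 0) (a : A) (i : ℤ) (x : A) :
    q ^ (-i) • qad q a i x - q ^ i • qad q a (-i) x
      = (q ^ (2 * i) - q ^ (-(2 * i))) • (x * a) := by
  simp only [qad, neg_neg, smul_sub, smul_smul, ← zpow_add₀ hq]
  ring_nf
  module

lemma key_left (q : F) (hq : q ≠ 0) (a : A) (i : ℤ) (x : A) :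
    q ^ i • qad q a i x - q ^ (-i) • qad q a (-i) x
      = (q ^ (2 * i) - q ^ (-(2 * i))) • (a * x) := by
  simp only [qad, neg_neg, smul_sub, smul_smul, ← zpow_add₀ hq]
  ring_nf
  module

lemma coeff_ne (q : F) (hq : q ≠ 0) (hroot : ∀ n : ℕ, 0 < n → q ^ n ≠ 1)
    (i : ℕ) (hi : 0 < i) : q ^ (2 * (i : ℤ)) - q ^ (-(2 * (i : ℤ))) ≠ 0 := by
  intro h
  rw [sub_eq_zero] at h
  have h4 : q ^ (4 * (i : ℤ)) = 1 := by
    calc q ^ (4 * (i : ℤ)) = q ^ (2 * (i : ℤ)) * q ^ (2 * (i : ℤ)) := by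
          rw [← zpow_add₀ hq]; ring_nf
      _ = q ^ (2 * (i : ℤ)) * q ^ (-(2 * (i : ℤ))) := by rw [h]
      _ = 1 := by rw [← zpow_add₀ hq, add_neg_cancel, zpow_zero]
  have : q ^ (4 * i) = 1 := by
    have := h4
    rw [show (4 * (i : ℤ)) = ((4 * i : ℕ) : ℤ) by push_cast; ring, zpow_natCast] at this
    exact this
  exact hroot (4 * i) (by omega) this

theorem stmt11 (q : F) (hq : q ≠ 0) (hroot : ∀ n : ℕ, 0 < n → q ^ n ≠ 1) (a : A) (i : ℕ) (hi : 0 < i) (x y : A) :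
    q ^ (-(i : ℤ)) • Smap q a i x - q ^ (i : ℤ) • Smap' q a i x = badProd q a i x * a ∧
    q ^ (i : ℤ) • Smap q a i y - q ^ (-(i : ℤ)) • Smap' q a i y = a * badProd q a i y := by
  obtain ⟨m, rfl⟩ : ∃ m, i = m + 1 := ⟨i - 1, by omega⟩
  have hc := coeff_ne q hq hroot (m + 1) (by omega)
  have hcast : ((m : ℤ) + 1) = ((m + 1 : ℕ) : ℤ) := by push_cast; ring
  have hcast2 : (2 * ((m + 1 : ℕ) : ℤ)) = (2 * (m + 1) : ℤ) := by push_cast; ring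
  rw [hcast2] at hc
  constructor
  · show q ^ (-((m + 1 : ℕ) : ℤ)) •
        ((q ^ (2 * (m + 1) : ℤ) - q ^ (-(2 * (m + 1)) : ℤ))⁻¹ •
          badProd q a (m + 1) (qad q a ((m : ℤ) + 1) x)) -
      q ^ ((m + 1 : ℕ) : ℤ) •
        ((q ^ (2 * (m + 1) : ℤ) - q ^ (-(2 * (m + 1)) : ℤ))⁻¹ •
          badProd q a (m + 1) (qad q a (-((m : ℤ) + 1)) x)) = _
    rw [smul_comm, smul_comm (q ^ ((m + 1 : ℕ) : ℤ)), ← smul_sub,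
      ← badProd_smul, ← badProd_smul, ← badProd_sub, hcast,
      key_right q hq a ((m + 1 : ℕ) : ℤ) x, badProd_smul,
      smul_smul, hcast2]
    rw [inv_mul_cancel₀ hc, one_smul, badProd_mul_right]
  · show q ^ ((m + 1 : ℕ) : ℤ) •
        ((q ^ (2 * (m + 1) : ℤ) - q ^ (-(2 * (m + 1)) : ℤ))⁻¹ •
          badProd q a (m + 1) (qad q a ((m : ℤ) + 1) y)) -
      q ^ (-((m + 1 : ℕ) : ℤ)) •
        ((q ^ (2 * (m + 1) : ℤ) - q ^ (-(2 * (m + 1)) : ℤ))⁻¹ •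
          badProd q a (m + 1) (qad q a (-((m : ℤ) + 1)) y)) = _
    rw [smul_comm, smul_comm (q ^ (-((m + 1 : ℕ) : ℤ))), ← smul_sub,
      ← badProd_smul, ← badProd_smul, ← badProd_sub, hcast,
      key_left q hq a ((m + 1 : ℕ) : ℤ) y, badProd_smul,
      smul_smul, hcast2]
    rw [inv_mul_cancel₀ hc, one_smul, badProd_mul_left]
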